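/- Two level-term normal forms are equal in the free level semilattice on n generators if and only if they denote the same function under every interpretation of the generators in ℕ (with ⊔ interpreted as max and suc as successor); equivalently, the quotient of level terms by the level-semilattice equations embeds into the level semilattice of functions ℕⁿ → ℕ. -/

import Mathlib

/-- Level terms over `n` generators. -/
inductive LTerm (n : ℕ) : Type
  | var : Fin n → LTerm n
  | sup : LTerm n → LTerm n → LTerm n
  | suc : LTerm n → LTerm n

/-- The congruence generated by the level-semilattice equations. -/
inductive LEq {n : ℕ} : LTerm n → LTerm n → Prop
  | refl (t) : LEq t t
  | symm {t u} : LEq t u → LEq u t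
  | trans {t u v} : LEq t u → LEq u v → LEq t v
  | supCongr {t t' u u'} : LEq t t' → LEq u u' → LEq (LTerm.sup t u) (LTerm.sup t' u')
  | sucCongr {t t'} : LEq t t' → LEq (LTerm.suc t) (LTerm.suc t')
  | supAssoc (t u v) : LEq (LTerm.sup (LTerm.sup t u) v) (LTerm.sup t (LTerm.sup u v))
  | supComm (t u) : LEq (LTerm.sup t u) (LTerm.sup u t)
  | supIdem (t) : LEq (LTerm.sup t t) t
  | supSuc (t) : LEq (LTerm.sup t (LTerm.suc t)) (LTerm.suc t)
  | sucSup (t u) : LEq (LTerm.suc (LTerm.sup t u)) (LTerm.sup (LTerm.suc t) (LTerm.suc u))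

/-- Interpretation of a level term in ℕ, with `⊔` as `max` and `suc` as successor. -/
def eval {n : ℕ} (ρ : Fin n → ℕ) : LTerm n → ℕ
  | LTerm.var j => ρ j
  | LTerm.sup t u => max (eval ρ t) (eval ρ u)
  | LTerm.suc t => eval ρ t + 1

-- auxiliary development

def iterSuc {n : ℕ} : ℕ → LTerm n → LTerm n
  | 0, t => t
  | k+1, t => LTerm.suc (iterSuc k t)

def elemT {n : ℕ} (p : Fin n × ℕ) : LTerm n := iterSuc p.2 (LTerm.var p.1)

def realizeT {n : ℕ} : Fin n × ℕ → List (Fin n × ℕ) → LTerm n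
  | a, [] => elemT a
  | a, b :: l => LTerm.sup (elemT a) (realizeT b l)

def shiftP {n : ℕ} (p : Fin n × ℕ) : Fin n × ℕ := (p.1, p.2 + 1)

def nfT {n : ℕ} : LTerm n → (Fin n × ℕ) × List (Fin n × ℕ)
  | LTerm.var j => ((j, 0), [])
  | LTerm.sup t u => ((nfT t).1, (nfT t).2 ++ (nfT u).1 :: (nfT u).2)
  | LTerm.suc t => (shiftP (nfT t).1, (nfT t).2.map shiftP)

/-- The derived order. -/
def LLe {n : ℕ} (t u : LTerm n) : Prop := LEq (LTerm.sup t u) u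

theorem lle_refl {n : ℕ} (t : LTerm n) : LLe t t := LEq.supIdem t

theorem lle_of_leq {n : ℕ} {t u : LTerm n} (h : LEq t u) : LLe t u :=
  (LEq.supCongr h (LEq.refl u)).trans (LEq.supIdem u)

theorem lle_trans {n : ℕ} {t u v : LTerm n} (h1 : LLe t u) (h2 : LLe u v) : LLe t v := by
  unfold LLe at *
  exact ((LEq.supCongr (LEq.refl t) h2.symm).trans
    ((LEq.supAssoc t u v).symm.trans (LEq.supCongr h1 (LEq.refl v)))).trans h2

theorem lle_antisymm {n : ℕ} {t u : LTerm n} (h1 : LLe t u) (h2 : LLe u t) : LEq t u :=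
  (h2.symm.trans (LEq.supComm u t)).trans h1

theorem lle_sup_left {n : ℕ} (t u : LTerm n) : LLe t (LTerm.sup t u) :=
  (LEq.supAssoc t t u).symm.trans (LEq.supCongr (LEq.supIdem t) (LEq.refl u))

theorem lle_sup_right {n : ℕ} (t u : LTerm n) : LLe u (LTerm.sup t u) :=
  ((LEq.supComm u (LTerm.sup t u)).trans (LEq.supAssoc t u u)).trans
    (LEq.supCongr (LEq.refl t) (LEq.supIdem u))

theorem lle_sup {n : ℕ} {t u v : LTerm n} (h1 : LLe t v) (h2 : LLe u v) : LLe (LTerm.sup t u) v :=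
  ((LEq.supAssoc t u v).trans (LEq.supCongr (LEq.refl t) h2)).trans h1

theorem lle_suc {n : ℕ} {t u : LTerm n} (h : LLe t u) : LLe (LTerm.suc t) (LTerm.suc u) :=
  (LEq.sucSup t u).symm.trans (LEq.sucCongr h)

theorem lle_iterSuc_self {n : ℕ} (k : ℕ) (t : LTerm n) : LLe t (iterSuc k t) := by
  induction k with
  | zero => exact lle_refl t
  | succ k ih => exact lle_trans ih (LEq.supSuc (iterSuc k t))

theorem iterSuc_add {n : ℕ} (k c : ℕ) (t : LTerm n) :
    iterSuc (k + c) t = iterSuc k (iterSuc c t) := by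
  induction k with
  | zero => simp [iterSuc]
  | succ k ih => simp [Nat.succ_add, iterSuc, ih]

theorem lle_iterSuc_mono {n : ℕ} {c c' : ℕ} (h : c ≤ c') (t : LTerm n) :
    LLe (iterSuc c t) (iterSuc c' t) := by
  obtain ⟨k, rfl⟩ := Nat.exists_eq_add_of_le h
  rw [Nat.add_comm, iterSuc_add]
  exact lle_iterSuc_self k (iterSuc c t)

theorem lle_elemT {n : ℕ} {p q : Fin n × ℕ} (h1 : q.1 = p.1) (h2 : p.2 ≤ q.2) :
    LLe (elemT p) (elemT q) := by
  unfold elemT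
  rw [h1]
  exact lle_iterSuc_mono h2 _

theorem lle_elem_realize {n : ℕ} {a : Fin n × ℕ} {b : Fin n × ℕ} {l : List (Fin n × ℕ)}
    (h : a ∈ b :: l) : LLe (elemT a) (realizeT b l) := by
  induction l generalizing b with
  | nil =>
    rcases List.mem_singleton.mp h with rfl
    exact lle_refl _
  | cons c l ih =>
    rcases List.mem_cons.mp h with rfl | h'
    · exact lle_sup_left _ _
    · exact lle_trans (ih h') (lle_sup_right _ _)

theorem lle_realize {n : ℕ} {b : Fin n × ℕ} {l : List (Fin n × ℕ)} {v : LTerm n}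
    (h : ∀ a ∈ b :: l, LLe (elemT a) v) : LLe (realizeT b l) v := by
  induction l generalizing b with
  | nil => exact h b (List.mem_singleton.mpr rfl)
  | cons c l ih =>
    exact lle_sup (h b List.mem_cons_self) (ih fun a ha => h a (List.mem_cons_of_mem _ ha))

theorem leq_realize_append {n : ℕ} (a b : Fin n × ℕ) (l m : List (Fin n × ℕ)) :
    LEq (LTerm.sup (realizeT a l) (realizeT b m)) (realizeT a (l ++ b :: m)) := by
  induction l generalizing a with
  | nil => exact LEq.refl _
  | cons c l ih =>
    exact (LEq.supAssoc (elemT a) (realizeT c l) (realizeT b m)).trans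
      (LEq.supCongr (LEq.refl (elemT a)) (ih c))

theorem leq_suc_realize {n : ℕ} (a : Fin n × ℕ) (l : List (Fin n × ℕ)) :
    LEq (LTerm.suc (realizeT a l)) (realizeT (shiftP a) (l.map shiftP)) := by
  induction l generalizing a with
  | nil => exact LEq.refl _
  | cons c l ih =>
    exact (LEq.sucSup (elemT a) (realizeT c l)).trans
      (LEq.supCongr (LEq.refl _) (ih c))

theorem leq_canon {n : ℕ} (t : LTerm n) : LEq t (realizeT (nfT t).1 (nfT t).2) := by
  induction t with
  | var j => exact LEq.refl _
  | sup t u iht ihu =>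
    exact (LEq.supCongr iht ihu).trans (leq_realize_append _ _ _ _)
  | suc t iht =>
    exact (LEq.sucCongr iht).trans (leq_suc_realize _ _)

theorem sound {n : ℕ} {t u : LTerm n} (h : LEq t u) : ∀ ρ : Fin n → ℕ, eval ρ t = eval ρ u := by
  intro ρ
  induction h with
  | refl t => rfl
  | symm _ ih => exact ih.symm
  | trans _ _ ih1 ih2 => exact ih1.trans ih2
  | supCongr _ _ ih1 ih2 => simp [eval, ih1, ih2]
  | sucCongr _ ih => simp [eval, ih]
  | supAssoc t u v => simp [eval, Nat.max_assoc]
  | supComm t u => simp [eval, Nat.max_comm]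
  | supIdem t => simp [eval]
  | supSuc t => simp [eval]
  | sucSup t u => simp [eval]

/-- max over a list. -/
def Mx {n : ℕ} (ρ : Fin n → ℕ) : List (Fin n × ℕ) → ℕ
  | [] => 0
  | p :: l => max (ρ p.1 + p.2) (Mx ρ l)

theorem eval_iterSuc {n : ℕ} (ρ : Fin n → ℕ) (k : ℕ) (t : LTerm n) :
    eval ρ (iterSuc k t) = eval ρ t + k := by
  induction k with
  | zero => rfl
  | succ k ih => simp [iterSuc, eval, ih]; omega

theorem eval_elemT {n : ℕ} (ρ : Fin n → ℕ) (p : Fin n × ℕ) :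
    eval ρ (elemT p) = ρ p.1 + p.2 := by
  simp [elemT, eval_iterSuc, eval]

theorem eval_realize {n : ℕ} (ρ : Fin n → ℕ) (a : Fin n × ℕ) (l : List (Fin n × ℕ)) :
    eval ρ (realizeT a l) = Mx ρ (a :: l) := by
  induction l generalizing a with
  | nil => simp [realizeT, Mx, eval_elemT]
  | cons c l ih => simp [realizeT, Mx, eval, eval_elemT, ih]

theorem mem_le_Mx {n : ℕ} (ρ : Fin n → ℕ) {p : Fin n × ℕ} {L : List (Fin n × ℕ)}
    (h : p ∈ L) : ρ p.1 + p.2 ≤ Mx ρ L := by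
  induction L with
  | nil => cases h
  | cons c L ih =>
    rcases List.mem_cons.mp h with rfl | h'
    · exact Nat.le_max_left _ _
    · exact (ih h').trans (Nat.le_max_right _ _)

theorem Mx_lt {n : ℕ} (ρ : Fin n → ℕ) {X : ℕ} {L : List (Fin n × ℕ)} (hX : 0 < X)
    (h : ∀ p ∈ L, ρ p.1 + p.2 < X) : Mx ρ L < X := by
  induction L with
  | nil => exact hX
  | cons c L ih =>
    simp only [Mx, Nat.max_lt]
    exact ⟨h c List.mem_cons_self, ih fun p hp => h p (List.mem_cons_of_mem _ hp)⟩

theorem dominator {n : ℕ} {a b : Fin n × ℕ} {l m : List (Fin n × ℕ)}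
    (H : ∀ ρ : Fin n → ℕ, Mx ρ (a :: l) = Mx ρ (b :: m))
    {p : Fin n × ℕ} (hp : p ∈ a :: l) : ∃ q ∈ b :: m, q.1 = p.1 ∧ p.2 ≤ q.2 := by
  by_contra hcon
  push_neg at hcon
  set C := Mx (fun _ => 0) (b :: m) with hC
  set B := C + 1 with hB
  set ρ : Fin n → ℕ := fun i => if i = p.1 then B else 0 with hρ
  have h1 : B + p.2 ≤ Mx ρ (a :: l) := by
    have := mem_le_Mx ρ hp
    simpa [hρ] using this
  have h2 : Mx ρ (b :: m) < B + p.2 := by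
    apply Mx_lt _ (by omega)
    intro q hq
    by_cases hq1 : q.1 = p.1
    · have := hcon q hq hq1
      simp [hρ, hq1]
      omega
    · have hqC : q.2 ≤ C := by
        have := mem_le_Mx (n := n) (fun _ => 0) hq
        simpa using this
      simp [hρ, hq1]
      omega
  rw [H ρ] at h1
  omega

theorem complete {n : ℕ} {t u : LTerm n} (H : ∀ ρ : Fin n → ℕ, eval ρ t = eval ρ u) :
    LEq t u := by
  have ct := leq_canon t
  have cu := leq_canon u
  have HM : ∀ ρ : Fin n → ℕ, Mx ρ ((nfT t).1 :: (nfT t).2) = Mx ρ ((nfT u).1 :: (nfT u).2) := by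
    intro ρ
    rw [← eval_realize, ← eval_realize, ← sound ct, ← sound cu]
    exact H ρ
  have h1 : LLe (realizeT (nfT t).1 (nfT t).2) (realizeT (nfT u).1 (nfT u).2) := by
    apply lle_realize
    intro p hp
    obtain ⟨q, hq, hq1, hq2⟩ := dominator HM hp
    exact lle_trans (lle_elemT hq1 hq2) (lle_elem_realize hq)
  have h2 : LLe (realizeT (nfT u).1 (nfT u).2) (realizeT (nfT t).1 (nfT t).2) := by
    apply lle_realize
    intro p hp
    obtain ⟨q, hq, hq1, hq2⟩ := dominator (fun ρ => (HM ρ).symm) hp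
    exact lle_trans (lle_elemT hq1 hq2) (lle_elem_realize hq)
  exact (ct.trans (lle_antisymm h1 h2)).trans cu.symm

theorem stmt_13 {n : ℕ} (t u : LTerm n) :
    LEq t u ↔ ∀ ρ : Fin n → ℕ, eval ρ t = eval ρ u := by
  exact ⟨fun h => sound h, complete⟩
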